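/- Let l ≥ 3 be an integer and let p be an odd prime with gcd(p, l) = 1. Let q = p^r for a positive integer r with q ≢ 1 (mod l), let f′ be a positive integer such that q^{f′} ≡ 1 (mod l), and set f = r f′. Then for every integer j, Σ_{1 ≤ t < l, gcd(t,l)=1} ( ⌊⟨t/l − j/(q−1)⟩ · p^{f−1}⌋ − ⌊⟨t/l − j/(q−1)⟩ · p^{r−1}⌋ ) ≡ 0 (mod 2), where the sum is over integers t with 1 ≤ t < l and gcd(t, l) = 1. -/

import Mathlib

private lemma reindex_sum {M : Type*} [AddCommMonoid M] (S : Finset ℕ) (σ τ : ℕ → ℕ)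
    (hσ : ∀ t ∈ S, σ t ∈ S) (hτ : ∀ t ∈ S, τ t ∈ S)
    (h1 : ∀ t ∈ S, τ (σ t) = t) (h2 : ∀ t ∈ S, σ (τ t) = t) (g : ℕ → M) :
    ∑ t ∈ S, g (σ t) = ∑ t ∈ S, g t :=
  Finset.sum_nbij' σ τ hσ hτ h1 h2 (fun _ _ => rfl)

theorem stmt6 (l : ℕ) (hl : 3 ≤ l) (p : ℕ) (hp : p.Prime) (hp2 : Odd p)
    (hpl : Nat.gcd p l = 1) (r : ℕ) (hr : 0 < r) (q : ℕ) (hq : q = p ^ r)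
    (hql : ¬ q ≡ 1 [MOD l]) (f' : ℕ) (hf' : 0 < f') (hqf' : q ^ f' ≡ 1 [MOD l])
    (f : ℕ) (hf : f = r * f') (j : ℤ) :
    (2 : ℤ) ∣ ∑ t ∈ (Finset.Ico 1 l).filter (fun t => Nat.Coprime t l),
      (⌊Int.fract ((t : ℚ) / l - (j : ℚ) / ((q : ℚ) - 1)) * (p : ℚ) ^ (f - 1)⌋
        - ⌊Int.fract ((t : ℚ) / l - (j : ℚ) / ((q : ℚ) - 1)) * (p : ℚ) ^ (r - 1)⌋) := by
  classical
  set S : Finset ℕ := (Finset.Ico 1 l).filter (fun t => Nat.Coprime t l) with hSdef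
  have hlQ : (l : ℚ) ≠ 0 := Nat.cast_ne_zero.mpr (by omega)
  have hp3 : 2 ≤ p := hp.two_le
  have hq2 : 2 ≤ q := by
    rw [hq]
    calc 2 ≤ p := hp3
    _ = p ^ 1 := (pow_one p).symm
    _ ≤ p ^ r := Nat.pow_le_pow_right (by omega) hr
  have hq2Q : (2 : ℚ) ≤ (q : ℚ) := by exact_mod_cast hq2
  have hq1Q : (q : ℚ) - 1 ≠ 0 := by linarith
  set A : ℚ := (j : ℚ) / ((q : ℚ) - 1) with hAdef
  have hA : ((q : ℚ) - 1) * A = (j : ℚ) := by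
    rw [hAdef]; field_simp
  clear_value A
  set x : ℕ → ℚ := fun t => Int.fract ((t : ℚ) / l - A) with hxdef
  set σ : ℕ → ℕ := fun t => (q * t) % l with hσdef
  set τ : ℕ → ℕ := fun t => (q ^ (f' - 1) * t) % l with hτdef
  have hqlcop : Nat.Coprime q l := by rw [hq]; exact Nat.Coprime.pow_left r hpl
  -- membership
  have hmem : ∀ m : ℕ, Nat.Coprime m l → ∀ t ∈ S, (m * t) % l ∈ S := by
    intro m hm t ht
    rw [hSdef, Finset.mem_filter, Finset.mem_Ico] at ht ⊢
    obtain ⟨⟨ht1, ht2⟩, htc⟩ := ht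
    have hcop : Nat.Coprime ((m * t) % l) l := by
      have : Nat.gcd l (m * t) = 1 := by
        rw [Nat.gcd_comm]; exact Nat.Coprime.mul hm htc
      rw [Nat.Coprime, ← Nat.gcd_rec]; exact this
    refine ⟨⟨?_, Nat.mod_lt _ (by omega)⟩, hcop⟩
    rcases Nat.eq_zero_or_pos ((m * t) % l) with h0 | h0
    · exfalso; rw [Nat.Coprime, h0] at hcop; simp [Nat.gcd_comm] at hcop; omega
    · exact h0
  have hσmem : ∀ t ∈ S, σ t ∈ S := hmem q hqlcop
  have hτmem : ∀ t ∈ S, τ t ∈ S := hmem _ (Nat.Coprime.pow_left _ hqlcop)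
  have htlt : ∀ t ∈ S, t < l := by
    intro t ht; rw [hSdef, Finset.mem_filter, Finset.mem_Ico] at ht; exact ht.1.2
  have hqf'mul : ∀ t : ℕ, t < l → (q ^ f' * t) % l = t := by
    intro t htl
    have h : q ^ f' * t ≡ 1 * t [MOD l] := Nat.ModEq.mul_right t hqf'
    rw [one_mul] at h
    calc (q ^ f' * t) % l = t % l := h
    _ = t := Nat.mod_eq_of_lt htl
  have hpow : q * q ^ (f' - 1) = q ^ f' := by
    conv_rhs => rw [show f' = (f' - 1) + 1 by omega]
    rw [pow_succ]; ring
  have hτσ : ∀ t ∈ S, τ (σ t) = t := by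
    intro t ht
    show (q ^ (f' - 1) * ((q * t) % l)) % l = t
    rw [Nat.mul_mod, Nat.mod_mod_of_dvd _ dvd_rfl, ← Nat.mul_mod, ← mul_assoc,
      mul_comm (q ^ (f' - 1)) q, hpow]
    exact hqf'mul t (htlt t ht)
  have hστ : ∀ t ∈ S, σ (τ t) = t := by
    intro t ht
    show (q * ((q ^ (f' - 1) * t) % l)) % l = t
    rw [Nat.mul_mod, Nat.mod_mod_of_dvd _ dvd_rfl, ← Nat.mul_mod, ← mul_assoc, hpow]
    exact hqf'mul t (htlt t ht)
  -- key: fract (x t * q) = x (σ t)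
  have key0 : ∀ t d m : ℕ, q * t = l * d + m →
      Int.fract (x t * q) = Int.fract ((m : ℚ) / l - A) := by
    intro t d m hdm0
    have hdm : (q : ℚ) * (t : ℚ) = (l : ℚ) * (d : ℚ) + (m : ℚ) := by exact_mod_cast hdm0
    have hxq : x t * q = ((m : ℚ) / l - A) +
        (((d : ℤ) - j - ⌊(t : ℚ) / l - A⌋ * q : ℤ) : ℚ) := by
      rw [hxdef]
      simp only [Int.fract]
      push_cast
      field_simp
      linear_combination hdm - (l : ℚ) * hA
    rw [hxq, Int.fract_add_intCast]
  have key : ∀ t : ℕ, Int.fract (x t * q) = x (σ t) := fun t =>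
    key0 t (q * t / l) ((q * t) % l) (Nat.div_add_mod (q * t) l).symm
  -- floor step
  have floorstep : ∀ t : ℕ, ∀ k : ℕ,
      ⌊x t * (p : ℚ) ^ (k + r)⌋ = ⌊x t * q⌋ * p ^ k + ⌊x (σ t) * (p : ℚ) ^ k⌋ := by
    intro t k
    have h1 : x t * (p : ℚ) ^ (k + r) = x (σ t) * (p : ℚ) ^ k +
        ((⌊x t * q⌋ * (p ^ k : ℤ) : ℤ) : ℚ) := by
      rw [← key t, Int.fract]
      have hqr : (q : ℚ) = (p : ℚ) ^ r := by rw [hq]; push_cast; ring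
      push_cast
      rw [hqr]
      ring
    rw [h1, Int.floor_add_intCast]
    push_cast
    ring
  set G : ℕ → ℤ := fun k => ∑ t ∈ S, ⌊x t * (p : ℚ) ^ k⌋ with hGdef
  set E : ℤ := ∑ t ∈ S, ⌊x t * (q : ℚ)⌋ with hEdef
  have Gstep : ∀ k : ℕ, G (k + r) = E * p ^ k + G k := by
    intro k
    simp only [hGdef, hEdef]
    rw [Finset.sum_congr rfl (fun t _ => floorstep t k), Finset.sum_add_distrib,
      ← Finset.sum_mul, reindex_sum S σ τ hσmem hτmem hτσ hστ (fun t => ⌊x t * (p : ℚ) ^ k⌋)]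
  -- parity of E
  have hqodd : Odd q := by rw [hq]; exact hp2.pow
  obtain ⟨a, ha⟩ := hqodd
  -- card even via totient
  have hScard : S.card = l.totient := by
    rw [Nat.totient_eq_card_coprime]
    congr 1
    ext t
    simp only [hSdef, Finset.mem_filter, Finset.mem_Ico, Finset.mem_range]
    constructor
    · rintro ⟨⟨h1, h2⟩, h3⟩; exact ⟨h2, h3.symm⟩
    · rintro ⟨h1, h2⟩
      refine ⟨⟨?_, h1⟩, h2.symm⟩
      rcases Nat.eq_zero_or_pos t with h0 | h0
      · exfalso; rw [h0, Nat.coprime_zero_right] at h2; omega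
      · exact h0
  have hceven : 2 ∣ S.card := by
    rw [hScard]
    exact (Nat.totient_even (by omega)).two_dvd
  obtain ⟨b, hb⟩ := hceven
  -- sum of t over S
  have hT : 2 * (∑ t ∈ S, t) = l * S.card := by
    have hρmem : ∀ t ∈ S, (l - t) ∈ S := by
      intro t ht
      rw [hSdef, Finset.mem_filter, Finset.mem_Ico] at ht ⊢
      obtain ⟨⟨h1, h2⟩, h3⟩ := ht
      exact ⟨⟨by omega, by omega⟩, (Nat.coprime_self_sub_left (by omega)).mpr h3⟩
    have hρρ : ∀ t ∈ S, l - (l - t) = t := by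
      intro t ht
      have := htlt t ht; omega
    have h1 : ∑ t ∈ S, (l - t) = ∑ t ∈ S, t :=
      Finset.sum_nbij' (fun t => l - t) (fun t => l - t) hρmem hρmem hρρ hρρ (fun t _ => rfl)
    have h2 : (∑ t ∈ S, t) + (∑ t ∈ S, (l - t)) = ∑ t ∈ S, l := by
      rw [← Finset.sum_add_distrib]
      apply Finset.sum_congr rfl
      intro t ht
      have := htlt t ht; omega
    rw [h1, Finset.sum_const, smul_eq_mul, mul_comm] at h2
    omega
  set B : ℤ := ∑ t ∈ S, ⌊(t : ℚ) / l - A⌋ with hBdef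
  have hEQ : 2 * (E : ℚ) = ((q : ℚ) - 1) * (S.card : ℚ) - 2 * (S.card : ℚ) * (j : ℚ)
      - 2 * ((q : ℚ) - 1) * (B : ℚ) := by
    have hE1 : (E : ℚ) = ∑ t ∈ S, (x t * q - x (σ t)) := by
      rw [hEdef]
      push_cast
      apply Finset.sum_congr rfl
      intro t _
      rw [← key t, Int.self_sub_fract]
    have hE2 : (E : ℚ) = ((q : ℚ) - 1) * ∑ t ∈ S, x t := by
      rw [hE1, Finset.sum_sub_distrib,
        reindex_sum S σ τ hσmem hτmem hτσ hστ (fun t => x t)]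
      rw [← Finset.sum_mul]
      ring
    have hx1 : ∑ t ∈ S, x t = (((∑ t ∈ S, t : ℕ) : ℚ)) / l - (S.card : ℚ) * A - (B : ℚ) := by
      rw [hxdef, hBdef]
      push_cast
      simp only [Int.fract]
      rw [Finset.sum_sub_distrib, Finset.sum_sub_distrib, Finset.sum_div, Finset.sum_const,
        nsmul_eq_mul]
    have hTQ : 2 * ((∑ t ∈ S, t : ℕ) : ℚ) = (l : ℚ) * (S.card : ℚ) := by exact_mod_cast hT
    have hTQ2 : ((∑ t ∈ S, t : ℕ) : ℚ) / l = (S.card : ℚ) / 2 := by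
      rw [div_eq_div_iff hlQ two_ne_zero]
      linarith
    rw [hE2, hx1, hTQ2]
    linear_combination (-2 : ℚ) * (S.card : ℚ) * hA
  have hEZ : 2 * E = ((q : ℤ) - 1) * (S.card : ℤ) - 2 * (S.card : ℤ) * j
      - 2 * ((q : ℤ) - 1) * B := by exact_mod_cast hEQ
  have hEeven : (2 : ℤ) ∣ E := by
    refine ⟨(a : ℤ) * b - b * j - a * B, ?_⟩
    have haZ : (q : ℤ) = 2 * (a : ℤ) + 1 := by exact_mod_cast ha
    have hbZ : (S.card : ℤ) = 2 * (b : ℤ) := by exact_mod_cast hb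
    have h3 : 2 * E = 2 * (2 * ((a : ℤ) * b - (b : ℤ) * j - (a : ℤ) * B)) := by
      rw [hEZ, haZ, hbZ]; ring
    linarith
  -- induction
  have main : ∀ m : ℕ, (2 : ℤ) ∣ G (r - 1 + m * r) - G (r - 1) := by
    intro m
    induction m with
    | zero => simp
    | succ n ih =>
      have h1 : r - 1 + (n + 1) * r = (r - 1 + n * r) + r := by
        have : (n + 1) * r = n * r + r := by ring
        omega
      rw [h1, Gstep]
      have h2 : E * p ^ (r - 1 + n * r) + G (r - 1 + n * r) - G (r - 1)
          = E * p ^ (r - 1 + n * r) + (G (r - 1 + n * r) - G (r - 1)) := by ring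
      rw [h2]
      exact dvd_add (hEeven.mul_right _) ih
  obtain ⟨g, rfl⟩ : ∃ g, f' = g + 1 := ⟨f' - 1, by omega⟩
  have hfr : f - 1 = r - 1 + g * r := by
    have h2 : f = g * r + r := by rw [hf]; ring
    omega
  have hgoal : (∑ t ∈ S, (⌊x t * (p : ℚ) ^ (f - 1)⌋ - ⌊x t * (p : ℚ) ^ (r - 1)⌋))
      = G (f - 1) - G (r - 1) := Finset.sum_sub_distrib _ _
  show (2 : ℤ) ∣ ∑ t ∈ S, (⌊x t * (p : ℚ) ^ (f - 1)⌋ - ⌊x t * (p : ℚ) ^ (r - 1)⌋)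
  rw [hgoal, hfr]
  exact main g
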